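/- The quasi-center of a divisibility monoid is a free Abelian monoid, i.e., isomorphic to a direct product of finitely many copies of ℕ. -/
import Mathlib


/-- `LDvd b a` : `b` left-divides `a`, i.e. `a = b * d` for some `d`. -/
def LDvd {M : Type*} [Monoid M] (b a : M) : Prop := ∃ d, a = b * d

/-- `c` is a right lcm of `a` and `b`. -/
def IsRightLcm {M : Type*} [Monoid M] (a b c : M) : Prop :=
  LDvd a c ∧ LDvd b c ∧ ∀ m, LDvd a m → LDvd b m → LDvd c m

/-- `1` is the only invertible element. -/
def Conical (M : Type*) [Monoid M] : Prop := ∀ u : M, IsUnit u → u = 1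

/-- Left and right cancellativity. -/
def Cancellative (M : Type*) [Monoid M] : Prop :=
  (∀ a b c : M, a * b = a * c → b = c) ∧ (∀ a b c : M, b * a = c * a → b = c)

/-- `IsRes a b r` : `r` is the residue `a \ b`, i.e. `a * r` is the right lcm `a ∨ b`. -/
def IsRes {M : Type*} [Monoid M] (a b r : M) : Prop := IsRightLcm a b (a * r)

/-- The set of irreducible elements of `M`. -/
def Irr (M : Type*) [Monoid M] : Set M :=
  {a | a ≠ 1 ∧ ∀ b c : M, a = b * c → b = 1 ∨ c = 1}

/-- `a` is quasi-central: `aΣ = Σa` where `Σ` is the set of irreducible elements. -/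
def QuasiCentral {M : Type*} [Monoid M] (a : M) : Prop :=
  (fun x => a * x) '' Irr M = (fun x => x * a) '' Irr M

/-- `g` is a left gcd of `a` and `b`. -/
def IsLeftGcd {M : Type*} [Monoid M] (a b g : M) : Prop :=
  LDvd g a ∧ LDvd g b ∧ ∀ d, LDvd d a → LDvd d b → LDvd d g

/-- `j` is the join of `x` and `y` inside the lattice `↓(a)` of left divisors of `a`. -/
def IsJoinIn {M : Type*} [Monoid M] (a x y j : M) : Prop :=
  LDvd j a ∧ LDvd x j ∧ LDvd y j ∧ ∀ m, LDvd m a → LDvd x m → LDvd y m → LDvd j m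

/-- A (left) divisibility monoid : cancellative, finitely generated by its irreducible
elements, any two elements admit a left gcd, and every `↓(a)` is a finite distributive
lattice under left divisibility (meets are left gcds, joins exist, distributivity holds). -/
structure IsDivisibilityMonoid (M : Type*) [Monoid M] : Prop where
  mul_left_cancel : ∀ a b c : M, a * b = a * c → b = c
  mul_right_cancel : ∀ a b c : M, b * a = c * a → b = c
  irr_finite : (Irr M).Finite
  irr_gen : ∀ a : M, a ∈ Submonoid.closure (Irr M)
  exists_gcd : ∀ a b : M, ∃ g, IsLeftGcd a b g
  divisors_finite : ∀ a : M, {b : M | LDvd b a}.Finite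
  exists_join : ∀ a x y : M, LDvd x a → LDvd y a → ∃ j, IsJoinIn a x y j
  distrib : ∀ a x y z : M, LDvd x a → LDvd y a → LDvd z a →
    ∀ jyz g gxy gxz j', IsJoinIn a y z jyz → IsLeftGcd x jyz g →
      IsLeftGcd x y gxy → IsLeftGcd x z gxz → IsJoinIn a gxy gxz j' → g = j'

/-- `d` is the (right) local delta of `a`: the right lcm of the set `{b \ a : b ∈ M}`,
all of whose elements are required to exist. -/
def IsLocalDelta {M : Type*} [Monoid M] (a d : M) : Prop :=
  (∀ b : M, ∃ r, IsRes b a r) ∧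
  (∀ b r : M, IsRes b a r → LDvd r d) ∧
  ∀ m : M, (∀ b r : M, IsRes b a r → LDvd r m) → LDvd d m

/-- The quasi-center of `M`, as a submonoid. -/
def quasiCenter (M : Type*) [Monoid M] : Submonoid M where
  carrier := {a | QuasiCentral a}
  one_mem' := by
    show (fun x => (1 : M) * x) '' Irr M = (fun x => x * 1) '' Irr M
    simp
  mul_mem' := by
    intro a b ha hb
    have ha' : (fun x : M => a * x) '' Irr M = (fun x => x * a) '' Irr M := ha
    have hb' : (fun x : M => b * x) '' Irr M = (fun x => x * b) '' Irr M := hb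
    show (fun x : M => a * b * x) '' Irr M = (fun x => x * (a * b)) '' Irr M
    calc (fun x : M => a * b * x) '' Irr M
        = (fun x : M => a * x) '' ((fun x : M => b * x) '' Irr M) := by
          rw [Set.image_image]; simp [mul_assoc]
      _ = (fun x : M => a * x) '' ((fun x : M => x * b) '' Irr M) := by rw [hb']
      _ = (fun x : M => x * b) '' ((fun x : M => a * x) '' Irr M) := by
          rw [Set.image_image, Set.image_image]; simp [mul_assoc]
      _ = (fun x : M => x * b) '' ((fun x : M => x * a) '' Irr M) := by rw [ha']
      _ = (fun x : M => x * (a * b)) '' Irr M := by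
          rw [Set.image_image]; simp [mul_assoc]

set_option linter.unusedSectionVars false

section DivMon

variable {M : Type*} [Monoid M]

theorem ldvd_refl (a : M) : LDvd a a := ⟨1, (mul_one a).symm⟩

theorem one_ldvd (a : M) : LDvd 1 a := ⟨a, (one_mul a).symm⟩

theorem ldvd_trans {a b c : M} (h1 : LDvd a b) (h2 : LDvd b c) : LDvd a c := by
  obtain ⟨d, rfl⟩ := h1; obtain ⟨e, rfl⟩ := h2; exact ⟨d * e, mul_assoc a d e⟩

theorem ldvd_mul_right (a b : M) : LDvd a (a * b) := ⟨b, rfl⟩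

theorem ldvd_mul_of_ldvd {a b : M} (c : M) (h : LDvd a b) : LDvd a (b * c) :=
  ldvd_trans h (ldvd_mul_right b c)

variable (hM : IsDivisibilityMonoid M)
include hM

theorem lcancel {a b c : M} (h : a * b = a * c) : b = c := hM.mul_left_cancel a b c h

theorem rcancel {a b c : M} (h : b * a = c * a) : b = c := hM.mul_right_cancel a b c h

/-- Conicality : a one-sided unit is trivial. -/
theorem unit_eq_one {u : M} (v : M) (huv : u * v = 1) : u = 1 := by
  have hvu : v * u = 1 := by
    have : u * (v * u) = u * 1 := by rw [← mul_assoc, huv, one_mul, mul_one]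
    exact lcancel hM this
  have h1u : LDvd u (1 : M) := ⟨v, huv.symm⟩
  have hjoin : IsJoinIn (1 : M) 1 1 u := by
    refine ⟨h1u, ⟨u, (one_mul u).symm⟩, ⟨u, (one_mul u).symm⟩, ?_⟩
    intro m _ _ _
    exact ⟨v * m, by rw [← mul_assoc, huv, one_mul]⟩
  have hgcd : IsLeftGcd (1 : M) u u := ⟨h1u, ldvd_refl u, fun d _ hd => hd⟩
  have htriv : IsLeftGcd (1 : M) 1 (1 : M) := ⟨ldvd_refl 1, ldvd_refl 1, fun d h1 _ => h1⟩
  have hj1 : IsJoinIn (1 : M) 1 1 (1 : M) :=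
    ⟨ldvd_refl 1, ldvd_refl 1, ldvd_refl 1, fun m _ h _ => h⟩
  exact hM.distrib 1 1 1 1 (ldvd_refl 1) (ldvd_refl 1) (ldvd_refl 1) u u 1 1 1
    hjoin hgcd htriv htriv hj1

theorem ldvd_one_iff {a : M} : LDvd a (1 : M) ↔ a = 1 := by
  constructor
  · rintro ⟨d, hd⟩; exact unit_eq_one hM d hd.symm
  · rintro rfl; exact ldvd_refl 1

theorem ldvd_antisymm {a b : M} (h1 : LDvd a b) (h2 : LDvd b a) : a = b := by
  obtain ⟨d, rfl⟩ := h1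
  obtain ⟨e, he⟩ := h2
  have hde : d * e = 1 := by
    have : a * 1 = a * (d * e) := by rw [mul_one, ← mul_assoc, ← he]
    exact (lcancel hM this).symm
  have : d = 1 := unit_eq_one hM e hde
  rw [this, mul_one]

omit hM in theorem ldvd_irr {σ d : M} (hσ : σ ∈ Irr M) (h : LDvd d σ) : d = 1 ∨ d = σ := by
  obtain ⟨e, he⟩ := h
  rcases hσ.2 d e he with h1 | h1
  · exact Or.inl h1
  · right; rw [he, h1, mul_one]

/-- Every element is the product of a list of irreducibles. -/
theorem exists_word (a : M) : ∃ l : List M, (∀ x ∈ l, x ∈ Irr M) ∧ l.prod = a := by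
  have := hM.irr_gen a
  induction this using Submonoid.closure_induction with
  | mem x hx => exact ⟨[x], by simpa using hx, by simp⟩
  | one => exact ⟨[], by simp, by simp⟩
  | mul x y hx hy ihx ihy =>
      obtain ⟨l1, h1, hp1⟩ := ihx
      obtain ⟨l2, h2, hp2⟩ := ihy
      refine ⟨l1 ++ l2, ?_, by rw [List.prod_append, hp1, hp2]⟩
      intro z hz
      rcases List.mem_append.1 hz with h | h
      exacts [h1 z h, h2 z h]

theorem gcd_unique {a b g g' : M} (h : IsLeftGcd a b g) (h' : IsLeftGcd a b g') : g = g' :=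
  ldvd_antisymm hM (h'.2.2 g h.1 h.2.1) (h.2.2 g' h'.1 h'.2.1)

theorem join_unique {a x y j j' : M} (h : IsJoinIn a x y j) (h' : IsJoinIn a x y j') : j = j' :=
  ldvd_antisymm hM (h.2.2.2 j' h'.1 h'.2.1 h'.2.2.1) (h'.2.2.2 j h.1 h.2.1 h.2.2.1)

omit hM in theorem gcd_of_ldvd {a b : M} (h : LDvd a b) : IsLeftGcd a b a :=
  ⟨ldvd_refl a, h, fun _ hd _ => hd⟩

omit hM in theorem gcd_of_ldvd' {a b : M} (h : LDvd b a) : IsLeftGcd a b b :=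
  ⟨h, ldvd_refl b, fun _ _ hd => hd⟩

omit hM in theorem join_self_one {a x : M} (h : LDvd x a) : IsJoinIn a x 1 x :=
  ⟨h, ldvd_refl x, one_ldvd x, fun _ _ hx _ => hx⟩

/-- Covering step for the exchange lemma : the cofactor of `τ` in `j = σ ∨ τ` is
irreducible. -/
theorem exchange_aux {σ τ a j t : M} (hσ : σ ∈ Irr M) (hτ : τ ∈ Irr M) (hne : σ ≠ τ)
    (h1 : LDvd σ a) (h2 : LDvd τ a) (hj : IsJoinIn a σ τ j) (ht : j = τ * t) :
    t ∈ Irr M := by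
  have main : ∀ u : M, LDvd (τ * u) j → u = 1 ∨ τ * u = j := by
    intro u hudvd
    set w := τ * u with hw
    have hwa : LDvd w a := ldvd_trans hudvd hj.1
    have hgw : IsLeftGcd w j w := gcd_of_ldvd hudvd
    have hgwτ : IsLeftGcd w τ τ := gcd_of_ldvd' (ldvd_mul_right τ u)
    by_cases hσw : LDvd σ w
    · have hgwσ : IsLeftGcd w σ σ := gcd_of_ldvd' hσw
      exact Or.inr (hM.distrib a w σ τ hwa h1 h2 j w σ τ j hj hgw hgwσ hgwτ hj)
    · have hgwσ : IsLeftGcd w σ 1 := by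
        refine ⟨one_ldvd w, one_ldvd σ, fun d hdw hdσ => ?_⟩
        rcases ldvd_irr hσ hdσ with rfl | rfl
        · exact ldvd_refl 1
        · exact absurd hdw hσw
      have hjoin1τ : IsJoinIn a 1 τ τ :=
        ⟨h2, one_ldvd τ, ldvd_refl τ, fun m _ _ hm => hm⟩
      have hwτ := hM.distrib a w σ τ hwa h1 h2 j w 1 τ τ hj hgw hgwσ hgwτ hjoin1τ
      left
      have h3 : τ * u = τ * 1 := by rw [mul_one]; exact hwτ
      exact lcancel hM h3
  constructor
  · rintro rfl
    rw [mul_one] at ht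
    have : LDvd σ τ := ht ▸ hj.2.1
    rcases ldvd_irr hτ this with h | h
    · exact hσ.1 h
    · exact hne h
  · intro u v huv
    rcases main u ⟨v, by rw [ht, huv, mul_assoc]⟩ with h | h
    · exact Or.inl h
    · right
      have h2' : τ * u * 1 = τ * u * v := by
        rw [mul_one, mul_assoc, ← huv, ← ht]; exact h
      exact (lcancel hM h2').symm

omit hM in theorem isJoinIn_symm {a x y j : M} (h : IsJoinIn a x y j) : IsJoinIn a y x j :=
  ⟨h.1, h.2.2.1, h.2.1, fun m hm h1 h2 => h.2.2.2 m hm h2 h1⟩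

/-- The exchange lemma: the join of two distinct irreducibles `σ, τ` dividing `a`
is `σ s = τ t` with `s, t` irreducible. -/
theorem exchange {σ τ a : M} (hσ : σ ∈ Irr M) (hτ : τ ∈ Irr M) (hne : σ ≠ τ)
    (h1 : LDvd σ a) (h2 : LDvd τ a) :
    ∃ s t j, s ∈ Irr M ∧ t ∈ Irr M ∧ j = σ * s ∧ j = τ * t ∧ IsJoinIn a σ τ j := by
  obtain ⟨j, hj⟩ := hM.exists_join a σ τ h1 h2
  obtain ⟨s, hs⟩ := hj.2.1
  obtain ⟨t, ht⟩ := hj.2.2.1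
  exact ⟨s, t, j, exchange_aux hM hτ hσ hne.symm h2 h1 (isJoinIn_symm hj) hs,
    exchange_aux hM hσ hτ hne h1 h2 hj ht, hs, ht, hj⟩

theorem word_eq_nil {l : List M} (h : ∀ x ∈ l, x ∈ Irr M) (hp : l.prod = 1) : l = [] := by
  cases l with
  | nil => rfl
  | cons σ r =>
    exfalso
    have hp1 : σ * r.prod = 1 := by simpa using hp
    exact (h σ (by simp)).1 (unit_eq_one hM r.prod hp1)

/-- Any two factorizations into irreducibles of the same element have equal length. -/
theorem len_eq (n : ℕ) : ∀ l₁ l₂ : List M, l₁.length ≤ n →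
    (∀ x ∈ l₁, x ∈ Irr M) → (∀ x ∈ l₂, x ∈ Irr M) → l₁.prod = l₂.prod →
    l₁.length = l₂.length := by
  induction n with
  | zero =>
    intro l₁ l₂ hlen h1 h2 hp
    have he : l₁ = [] := List.eq_nil_of_length_eq_zero (Nat.le_zero.1 hlen)
    subst he
    rw [word_eq_nil hM h2 (by simpa using hp.symm)]
  | succ n ih =>
    intro l₁ l₂ hlen h1 h2 hp
    cases l₁ with
    | nil => rw [word_eq_nil hM h2 (by simpa using hp.symm)]
    | cons σ r₁ =>
      cases l₂ with
      | nil =>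
        exfalso
        have hp1 : σ * r₁.prod = 1 := by simpa using hp
        exact (h1 σ (by simp)).1 (unit_eq_one hM _ hp1)
      | cons τ r₂ =>
        have hσ : σ ∈ Irr M := h1 σ (by simp)
        have hτ : τ ∈ Irr M := h2 τ (by simp)
        have hr₁ : ∀ x ∈ r₁, x ∈ Irr M := fun x hx => h1 x (by simp [hx])
        have hr₂ : ∀ x ∈ r₂, x ∈ Irr M := fun x hx => h2 x (by simp [hx])
        have hlen1 : r₁.length ≤ n := by simpa using hlen
        have hp' : σ * r₁.prod = τ * r₂.prod := by simpa using hp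
        by_cases hst : σ = τ
        · subst hst
          have hr : r₁.prod = r₂.prod := lcancel hM hp'
          simp [ih r₁ r₂ hlen1 hr₁ hr₂ hr]
        · obtain ⟨s, t, j, hs, ht, hjs, hjt, hj⟩ :=
            exchange hM hσ hτ hst ⟨r₁.prod, rfl⟩ ⟨r₂.prod, hp'⟩
          obtain ⟨w, hw⟩ := hj.1
          obtain ⟨lw, hlw, hlwp⟩ := exists_word hM w
          have e1 : r₁.prod = s * w :=
            lcancel hM (hw.trans (by rw [hjs, mul_assoc]))
          have e2 : r₂.prod = t * w :=
            lcancel hM ((hp'.symm.trans hw).trans (by rw [hjt, mul_assoc]))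
          have hslw : ∀ x ∈ s :: lw, x ∈ Irr M := by
            intro x hx
            rcases List.mem_cons.1 hx with rfl | hx
            · exact hs
            · exact hlw x hx
          have htlw : ∀ x ∈ t :: lw, x ∈ Irr M := by
            intro x hx
            rcases List.mem_cons.1 hx with rfl | hx
            · exact ht
            · exact hlw x hx
          have ihr₁ := ih r₁ (s :: lw) hlen1 hr₁ hslw (by simp [e1, hlwp])
          have hlen2 : (t :: lw).length ≤ n := by
            simp only [List.length_cons] at ihr₁ ⊢; omega
          have ihr₂ := ih (t :: lw) r₂ hlen2 htlw hr₂ (by simp [e2, hlwp])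
          simp only [List.length_cons] at ihr₁ ihr₂ ⊢
          omega

end DivMon

/-- The length of an element of a divisibility monoid. -/
noncomputable def lam {M : Type*} [Monoid M] (hM : IsDivisibilityMonoid M) (a : M) : ℕ :=
  (exists_word hM a).choose.length

section DivMon2

variable {M : Type*} [Monoid M] (hM : IsDivisibilityMonoid M)
include hM

theorem lam_eq {l : List M} (h : ∀ x ∈ l, x ∈ Irr M) : lam hM l.prod = l.length := by
  have spec := (exists_word hM l.prod).choose_spec
  exact len_eq hM (exists_word hM l.prod).choose.length _ l (le_refl _) spec.1 h spec.2

theorem lam_mul (a b : M) : lam hM (a * b) = lam hM a + lam hM b := by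
  obtain ⟨la, ha, hpa⟩ := exists_word hM a
  obtain ⟨lb, hb, hpb⟩ := exists_word hM b
  have hab : ∀ x ∈ la ++ lb, x ∈ Irr M := by
    intro x hx
    rcases List.mem_append.1 hx with h | h
    exacts [ha x h, hb x h]
  have h1 : lam hM ((la ++ lb).prod) = la.length + lb.length := by
    rw [lam_eq hM hab, List.length_append]
  rw [List.prod_append, hpa, hpb] at h1
  rw [h1, ← hpa, ← hpb, lam_eq hM ha, lam_eq hM hb]

theorem lam_one : lam hM (1 : M) = 0 := by
  simpa using lam_eq hM (l := []) (by simp)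

theorem lam_eq_zero {a : M} (h : lam hM a = 0) : a = 1 := by
  have spec := (exists_word hM a).choose_spec
  have hl : (exists_word hM a).choose = [] :=
    List.eq_nil_of_length_eq_zero h
  rw [← spec.2, hl, List.prod_nil]

theorem lam_pos {a : M} (h : a ≠ 1) : 1 ≤ lam hM a := by
  rcases Nat.eq_zero_or_pos (lam hM a) with h0 | h0
  · exact absurd (lam_eq_zero hM h0) h
  · exact h0

theorem lam_irr {σ : M} (h : σ ∈ Irr M) : lam hM σ = 1 := by
  simpa using lam_eq hM (l := [σ]) (by simpa using h)

theorem irr_of_lam_one {y : M} (h : lam hM y = 1) : y ∈ Irr M := by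
  have spec := (exists_word hM y).choose_spec
  obtain ⟨x, hx⟩ := List.length_eq_one_iff.1 h
  rw [← spec.2, hx, List.prod_singleton]
  exact spec.1 x (by rw [hx]; simp)

theorem ldvd_lam_lt {a b d : M} (h : b = a * d) (hd : d ≠ 1) : lam hM a < lam hM b := by
  have := lam_mul hM a d
  rw [← h] at this
  have := lam_pos hM hd
  omega

theorem finite_lam_le (n : ℕ) : {x : M | lam hM x ≤ n}.Finite := by
  have Sfin : ∀ m : ℕ, {l : List M | (∀ x ∈ l, x ∈ Irr M) ∧ l.length ≤ m}.Finite := by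
    intro m
    induction m with
    | zero =>
      apply Set.Finite.subset (Set.finite_singleton ([] : List M))
      rintro l ⟨_, hlen⟩
      simp [List.eq_nil_of_length_eq_zero (Nat.le_zero.1 hlen)]
    | succ m ih =>
      apply Set.Finite.subset
        (Set.Finite.insert [] (Set.Finite.biUnion hM.irr_finite
          (fun σ _ => ih.image (fun l => σ :: l))))
      rintro l ⟨hl, hlen⟩
      cases l with
      | nil => exact Set.mem_insert _ _
      | cons σ r =>
        right
        refine Set.mem_biUnion (hl σ (by simp)) ?_
        refine ⟨r, ⟨fun x hx => hl x (by simp [hx]), ?_⟩, rfl⟩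
        simpa using hlen
  apply Set.Finite.subset ((Sfin n).image List.prod)
  intro x hx
  have spec := (exists_word hM x).choose_spec
  exact ⟨(exists_word hM x).choose, ⟨spec.1, hx⟩, spec.2⟩

/-- The key counting argument : if everything can be pushed from left to right across `c`
then everything can be pushed from right to left. -/
theorem flip_comm {c : M} (H : ∀ x : M, ∃ y, x * c = c * y) :
    ∀ y : M, ∃ x, x * c = c * y := by
  intro y
  classical
  set n := lam hM y with hn
  have hS : {z : M | lam hM z ≤ n}.Finite := finite_lam_le hM n
  haveI := hS.to_subtype
  have key : ∀ x : M, lam hM (H x).choose = lam hM x := by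
    intro x
    have hx := (H x).choose_spec
    have h1 := congrArg (lam hM) hx
    rw [lam_mul hM, lam_mul hM] at h1
    omega
  let θ : {z : M | lam hM z ≤ n} → {z : M | lam hM z ≤ n} :=
    fun z => ⟨(H z.1).choose, by
      have hz := z.2
      simp only [Set.mem_setOf_eq] at hz ⊢
      rw [key z.1]; exact hz⟩
  have hinj : Function.Injective θ := by
    intro z1 z2 hz
    have e1 := (H z1.1).choose_spec
    have e2 := (H z2.1).choose_spec
    have hcc : (H z1.1).choose = (H z2.1).choose := congrArg Subtype.val hz
    apply Subtype.ext
    exact rcancel hM (e1.trans (by rw [hcc, ← e2]))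
  obtain ⟨⟨x, hx⟩, hθ⟩ := Finite.injective_iff_surjective.1 hinj
    ⟨y, by simp only [Set.mem_setOf_eq, hn]; exact le_refl _⟩
  refine ⟨x, ?_⟩
  have hcy : (H x).choose = y := congrArg Subtype.val hθ
  rw [(H x).choose_spec, hcy]

omit hM in
theorem ldvd_mul_mono (x : M) {u v : M} (h : LDvd u v) : LDvd (x * u) (x * v) := by
  obtain ⟨d, hd⟩ := h; exact ⟨d, by rw [hd, mul_assoc]⟩

theorem qc_move {a : M} (ha : QuasiCentral a) :
    (∀ x : M, ∃ y, a * x = y * a) ∧ (∀ x : M, ∃ y, x * a = a * y) := by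
  have h1 : ∀ σ ∈ Irr M, ∃ τ, a * σ = τ * a := by
    intro σ hσ
    have hm : a * σ ∈ (fun x => x * a) '' Irr M := ha ▸ ⟨σ, hσ, rfl⟩
    obtain ⟨τ, _, he⟩ := hm
    exact ⟨τ, he.symm⟩
  have h2 : ∀ σ ∈ Irr M, ∃ τ, σ * a = a * τ := by
    intro σ hσ
    have hm : σ * a ∈ (fun x => a * x) '' Irr M := ha.symm ▸ ⟨σ, hσ, rfl⟩
    obtain ⟨τ, _, he⟩ := hm
    exact ⟨τ, he.symm⟩
  constructor
  · intro x
    have hx := hM.irr_gen x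
    induction hx using Submonoid.closure_induction with
    | mem σ hσ => exact h1 σ hσ
    | one => exact ⟨1, by simp⟩
    | mul x y hx hy ihx ihy =>
      obtain ⟨y1, e1⟩ := ihx; obtain ⟨y2, e2⟩ := ihy
      refine ⟨y1 * y2, ?_⟩
      calc a * (x * y) = a * x * y := (mul_assoc _ _ _).symm
        _ = y1 * a * y := by rw [e1]
        _ = y1 * (a * y) := mul_assoc _ _ _
        _ = y1 * (y2 * a) := by rw [e2]
        _ = y1 * y2 * a := (mul_assoc _ _ _).symm
  · intro x
    have hx := hM.irr_gen x
    induction hx using Submonoid.closure_induction with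
    | mem σ hσ => exact h2 σ hσ
    | one => exact ⟨1, by simp⟩
    | mul x y hx hy ihx ihy =>
      obtain ⟨y1, e1⟩ := ihx; obtain ⟨y2, e2⟩ := ihy
      refine ⟨y1 * y2, ?_⟩
      calc x * y * a = x * (y * a) := mul_assoc _ _ _
        _ = x * (a * y2) := by rw [e2]
        _ = x * a * y2 := (mul_assoc _ _ _).symm
        _ = a * y1 * y2 := by rw [e1]
        _ = a * (y1 * y2) := mul_assoc _ _ _

theorem qc_of_move {a : M} (H : ∀ x : M, ∃ y, x * a = a * y) : QuasiCentral a := by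
  have H' := flip_comm hM H
  unfold QuasiCentral
  ext z
  constructor
  · rintro ⟨σ, hσ, rfl⟩
    obtain ⟨x, hx⟩ := H' σ
    have hlx : lam hM x = 1 := by
      have h1 := congrArg (lam hM) hx
      rw [lam_mul hM, lam_mul hM, lam_irr hM hσ] at h1
      omega
    exact ⟨x, irr_of_lam_one hM hlx, hx⟩
  · rintro ⟨σ, hσ, rfl⟩
    obtain ⟨y, hy⟩ := H σ
    have hly : lam hM y = 1 := by
      have h1 := congrArg (lam hM) hy
      rw [lam_mul hM, lam_mul hM, lam_irr hM hσ] at h1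
      omega
    exact ⟨y, irr_of_lam_one hM hly, hy.symm⟩

theorem div_qc_left {a b : M} (ha : QuasiCentral a) (hab : QuasiCentral (a * b)) :
    QuasiCentral b := by
  apply qc_of_move hM
  intro x
  obtain ⟨z, hz⟩ := (qc_move hM ha).1 x
  obtain ⟨w, hw⟩ := (qc_move hM hab).2 z
  refine ⟨w, lcancel hM (a := a) ?_⟩
  calc a * (x * b) = a * x * b := (mul_assoc _ _ _).symm
    _ = z * a * b := by rw [hz]
    _ = z * (a * b) := mul_assoc _ _ _
    _ = a * b * w := hw
    _ = a * (b * w) := mul_assoc _ _ _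

theorem div_qc_right {a b : M} (hb : QuasiCentral b) (hab : QuasiCentral (a * b)) :
    QuasiCentral a := by
  apply qc_of_move hM
  intro x
  obtain ⟨z, hz⟩ := (qc_move hM hab).2 x
  obtain ⟨w, hw⟩ := (qc_move hM hb).1 z
  refine ⟨w, rcancel hM (a := b) ?_⟩
  calc x * a * b = x * (a * b) := mul_assoc _ _ _
    _ = a * b * z := hz
    _ = a * (b * z) := mul_assoc _ _ _
    _ = a * (w * b) := by rw [hw]
    _ = a * w * b := (mul_assoc _ _ _).symm

theorem gcdMulLeft (x : M) {a b g : M} (hg : IsLeftGcd a b g) :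
    IsLeftGcd (x * a) (x * b) (x * g) := by
  refine ⟨ldvd_mul_mono x hg.1, ldvd_mul_mono x hg.2.1, ?_⟩
  intro dd h1 h2
  obtain ⟨G, hG⟩ := hM.exists_gcd (x * a) (x * b)
  obtain ⟨h, hh⟩ := hG.2.2 x (ldvd_mul_right x a) (ldvd_mul_right x b)
  have hha : LDvd h a := by
    obtain ⟨u, hu⟩ := hG.1
    exact ⟨u, lcancel hM (show x * a = x * (h * u) by rw [← mul_assoc, ← hh, ← hu])⟩
  have hhb : LDvd h b := by
    obtain ⟨u, hu⟩ := hG.2.1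
    exact ⟨u, lcancel hM (show x * b = x * (h * u) by rw [← mul_assoc, ← hh, ← hu])⟩
  have hGxg : LDvd G (x * g) := hh ▸ ldvd_mul_mono x (hg.2.2 h hha hhb)
  exact ldvd_trans (hG.2.2 dd h1 h2) hGxg

theorem gcd_qc {a b g : M} (ha : QuasiCentral a) (hb : QuasiCentral b)
    (hg : IsLeftGcd a b g) : QuasiCentral g := by
  apply qc_of_move hM
  intro x
  have hxg := gcdMulLeft hM x hg
  have hga : LDvd g (x * a) := by
    obtain ⟨ρ, hρ⟩ := (qc_move hM ha).2 x
    rw [hρ]; exact ldvd_mul_of_ldvd ρ hg.1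
  have hgb : LDvd g (x * b) := by
    obtain ⟨ρ, hρ⟩ := (qc_move hM hb).2 x
    rw [hρ]; exact ldvd_mul_of_ldvd ρ hg.2.1
  exact hxg.2.2 g hga hgb

theorem join_dvd_cm {m a b j m' : M} (hj : IsJoinIn m a b j)
    (h1 : LDvd a m') (h2 : LDvd b m') : LDvd j m' := by
  obtain ⟨G, hG⟩ := hM.exists_gcd m m'
  have haG : LDvd a G := hG.2.2 a (ldvd_trans hj.2.1 hj.1) h1
  have hbG : LDvd b G := hG.2.2 b (ldvd_trans hj.2.2.1 hj.1) h2
  exact ldvd_trans (hj.2.2.2 G hG.1 haG hbG) hG.2.1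

/-- Quasi-central elements commute. -/
theorem qc_comm_aux (n : ℕ) : ∀ a b : M, QuasiCentral a → QuasiCentral b →
    lam hM a + lam hM b ≤ n → a * b = b * a := by
  induction n using Nat.strong_induction_on with
  | _ n ih =>
  intro a b ha hb hlen
  by_cases ha1 : a = 1
  · rw [ha1, one_mul, mul_one]
  by_cases hb1 : b = 1
  · rw [hb1, one_mul, mul_one]
  obtain ⟨g, hg⟩ := hM.exists_gcd a b
  have hgq : QuasiCentral g := gcd_qc hM ha hb hg
  by_cases hgone : g = 1
  · -- coprime case : chain argument shows a*b = (a ∨ b) = b*a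
    subst hgone
    obtain ⟨l, hl, hlp⟩ := exists_word hM a
    obtain ⟨yb, hyb⟩ := (qc_move hM hb).2 a
    have hbab : LDvd b (a * b) := ⟨yb, hyb⟩
    have haab : LDvd a (a * b) := ldvd_mul_right a b
    have hxa : ∀ k : ℕ, LDvd ((l.take k).prod) a :=
      fun k => ⟨(l.drop k).prod, by rw [← hlp, ← List.prod_append, List.take_append_drop]⟩
    have key : ∀ i : ℕ, i ≤ l.length →
        ∃ j, IsJoinIn (a * b) ((l.take i).prod) b j ∧ lam hM b + i ≤ lam hM j := by
      intro i
      induction i with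
      | zero =>
        intro _
        rw [List.take_zero, List.prod_nil]
        exact ⟨b, ⟨hbab, one_ldvd b, ldvd_refl b, fun m _ _ h => h⟩, by simp⟩
      | succ i ihi =>
        intro hlen'
        obtain ⟨ji, hji, hlami⟩ := ihi (by omega)
        have hilt : i < l.length := by omega
        have hstep : (l.take (i + 1)).prod = (l.take i).prod * l[i] :=
          List.prod_take_succ l i hilt
        have hx1a : LDvd ((l.take (i + 1)).prod) (a * b) :=
          ldvd_mul_of_ldvd b (hxa (i + 1))
        have hxia : LDvd ((l.take i).prod) (a * b) := ldvd_mul_of_ldvd b (hxa i)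
        obtain ⟨j', hj'⟩ := hM.exists_join (a * b) ((l.take (i + 1)).prod) b hx1a hbab
        have hjij' : LDvd ji j' :=
          hji.2.2.2 j' hj'.1 (ldvd_trans ⟨l[i], hstep⟩ hj'.2.1) hj'.2.2.1
        have hne : ji ≠ j' := by
          intro he
          obtain ⟨G, hG⟩ := hM.exists_gcd a ji
          have e1 := hM.distrib (a * b) a ((l.take i).prod) b haab hxia hbab
            ji G ((l.take i).prod) 1 ((l.take i).prod) hji hG
            (gcd_of_ldvd' (hxa i)) hg (join_self_one hxia)
          have e2 := hM.distrib (a * b) a ((l.take (i + 1)).prod) b haab hx1a hbab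
            j' G ((l.take (i + 1)).prod) 1 ((l.take (i + 1)).prod) hj' (he ▸ hG)
            (gcd_of_ldvd' (hxa (i + 1))) hg (join_self_one hx1a)
          have e3 : (l.take i).prod * 1 = (l.take i).prod * l[i] := by
            rw [mul_one, ← hstep, ← e2, e1]
          exact (hl l[i] (List.getElem_mem hilt)).1 (lcancel hM e3).symm
        obtain ⟨d, hd⟩ := hjij'
        have hd1 : d ≠ 1 := fun h => hne (by rw [hd, h, mul_one])
        refine ⟨j', hj', ?_⟩
        have h4 := congrArg (lam hM) hd
        rw [lam_mul hM] at h4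
        have h5 := lam_pos hM hd1
        omega
    obtain ⟨j, hj, hlamj⟩ := key l.length (le_refl _)
    rw [List.take_length, hlp] at hj
    have hlla : l.length = lam hM a := by rw [← hlp]; exact (lam_eq hM hl).symm
    rw [hlla] at hlamj
    obtain ⟨u, hu⟩ := hj.1
    have hu0 : lam hM u = 0 := by
      have h6 := congrArg (lam hM) hu
      rw [lam_mul hM, lam_mul hM] at h6
      omega
    have hab : a * b = j := by rw [hu, lam_eq_zero hM hu0, mul_one]
    obtain ⟨ya, hya⟩ := (qc_move hM ha).2 b
    have h1 : LDvd a (b * a) := ⟨ya, hya⟩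
    have h2 : LDvd b (b * a) := ldvd_mul_right b a
    obtain ⟨w, hw⟩ := join_dvd_cm hM hj h1 h2
    have hw0 : lam hM w = 0 := by
      have h6 := congrArg (lam hM) hw
      rw [lam_mul hM, lam_mul hM] at h6
      omega
    rw [hab, ← (show b * a = j by rw [hw, lam_eq_zero hM hw0, mul_one])]
  · -- g ≠ 1 : peel off the gcd and use the inductive hypothesis
    obtain ⟨a₁, ha₁⟩ := hg.1
    obtain ⟨b₁, hb₁⟩ := hg.2.1
    have haq₁ : QuasiCentral a₁ := div_qc_left hM hgq (ha₁ ▸ ha)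
    have hbq₁ : QuasiCentral b₁ := div_qc_left hM hgq (hb₁ ▸ hb)
    have hla : lam hM a = lam hM g + lam hM a₁ := by rw [ha₁, lam_mul hM]
    have hlb : lam hM b = lam hM g + lam hM b₁ := by rw [hb₁, lam_mul hM]
    have hg1 := lam_pos hM hgone
    have hap := lam_pos hM ha1
    have hbp := lam_pos hM hb1
    have c1 : g * a₁ = a₁ * g :=
      ih (lam hM g + lam hM a₁) (by omega) g a₁ hgq haq₁ (le_refl _)
    have c2 : a₁ * b₁ = b₁ * a₁ :=
      ih (lam hM a₁ + lam hM b₁) (by omega) a₁ b₁ haq₁ hbq₁ (le_refl _)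
    have c3 : g * b₁ = b₁ * g :=
      ih (lam hM g + lam hM b₁) (by omega) g b₁ hgq hbq₁ (le_refl _)
    have main : g * a₁ * (g * b₁) = g * b₁ * (g * a₁) := by
      calc g * a₁ * (g * b₁) = g * (a₁ * (g * b₁)) := mul_assoc _ _ _
        _ = g * (a₁ * g * b₁) := by rw [mul_assoc]
        _ = g * (g * a₁ * b₁) := by rw [← c1]
        _ = g * (g * (a₁ * b₁)) := by rw [mul_assoc]
        _ = g * (g * (b₁ * a₁)) := by rw [c2]
        _ = g * (g * b₁ * a₁) := by rw [← mul_assoc g b₁ a₁]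
        _ = g * (b₁ * g * a₁) := by rw [c3]
        _ = g * (b₁ * (g * a₁)) := by rw [mul_assoc b₁ g a₁]
        _ = g * b₁ * (g * a₁) := (mul_assoc _ _ _).symm
    rw [ha₁, hb₁, main]

theorem qc_comm {a b : M} (ha : QuasiCentral a) (hb : QuasiCentral b) : a * b = b * a :=
  qc_comm_aux hM (lam hM a + lam hM b) a b ha hb (le_refl _)



end DivMon2

/-- An atom of the quasi-center. -/
def QAtom {M : Type*} [Monoid M] (p : M) : Prop :=
  QuasiCentral p ∧ p ≠ 1 ∧
    ∀ u v : M, QuasiCentral u → QuasiCentral v → p = u * v → u = 1 ∨ v = 1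

section DivMon3

variable {M : Type*} [Monoid M] (hM : IsDivisibilityMonoid M)
include hM

omit hM in
theorem mem_qc {a : M} (h : a ∈ quasiCenter M) : QuasiCentral a := h

omit hM in
theorem qc_mem {a : M} (h : QuasiCentral a) : a ∈ quasiCenter M := h

/-- Distinct atoms of the quasi-center have no common divisor. -/
theorem atom_cop {p q : M} (hp : QAtom p) (hq : QAtom q) (hne : p ≠ q) {d : M}
    (hdp : LDvd d p) (hdq : LDvd d q) : d = 1 := by
  obtain ⟨G, hG⟩ := hM.exists_gcd p q
  have hGq : QuasiCentral G := gcd_qc hM hp.1 hq.1 hG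
  obtain ⟨p', hp'⟩ := hG.1
  have hp'q : QuasiCentral p' := div_qc_left hM hGq (hp' ▸ hp.1)
  have hG1 : G = 1 := by
    rcases hp.2.2 G p' hGq hp'q hp' with h | h
    · exact h
    · exfalso
      have hpq : LDvd p q := by
        rw [← (show G = p by rw [hp', h, mul_one])]; exact hG.2.1
      obtain ⟨q', hq'⟩ := hpq
      have hq'q : QuasiCentral q' := div_qc_left hM hp.1 (hq' ▸ hq.1)
      rcases hq.2.2 p q' hp.1 hq'q hq' with h2 | h2
      · exact hp.2.1 h2
      · exact hne (by rw [hq', h2, mul_one])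
  have hd1 := hG.2.2 d hdp hdq
  rw [hG1] at hd1
  exact (ldvd_one_iff hM).1 hd1

theorem atoms_finite : {p : M | QAtom p}.Finite := by
  classical
  have hch : ∀ p : M, QAtom p → ∃ σ, σ ∈ Irr M ∧ LDvd σ p := by
    intro p hp
    obtain ⟨l, hl, hlp⟩ := exists_word hM p
    cases l with
    | nil => exact absurd (by simpa using hlp.symm) hp.2.1
    | cons σ r => exact ⟨σ, hl σ (by simp), ⟨r.prod, by rw [← hlp]; simp⟩⟩
  set f : M → M := fun p => if h : ∃ σ, σ ∈ Irr M ∧ LDvd σ p then h.choose else 1 with hf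
  have hfspec : ∀ p : M, QAtom p → f p ∈ Irr M ∧ LDvd (f p) p := by
    intro p hp
    rw [hf]
    simp only
    rw [dif_pos (hch p hp)]
    exact (hch p hp).choose_spec
  apply Set.Finite.of_finite_image (f := f)
  · apply Set.Finite.subset hM.irr_finite
    rintro y ⟨p, hp, rfl⟩
    exact (hfspec p hp).1
  · intro p hp q hq hfpq
    by_contra hne
    have h1 := hfspec p hp
    have h2 := hfspec q hq
    have hd := atom_cop hM hp hq hne h1.2 (hfpq ▸ h2.2)
    exact h1.1.1 hd

theorem exists_atom_dvd (n : ℕ) : ∀ q : M, lam hM q ≤ n → QuasiCentral q → q ≠ 1 →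
    ∃ p r, QAtom p ∧ QuasiCentral r ∧ q = p * r := by
  induction n with
  | zero =>
    intro q hq _ hq1
    exact absurd (lam_eq_zero hM (Nat.le_zero.1 hq)) hq1
  | succ n ih =>
    intro q hlq hq hq1
    by_cases hat : QAtom q
    · exact ⟨q, 1, hat, mem_qc ((quasiCenter M).one_mem), (mul_one q).symm⟩
    · have hex : ∃ u v : M, QuasiCentral u ∧ QuasiCentral v ∧ q = u * v ∧ u ≠ 1 ∧ v ≠ 1 := by
        unfold QAtom at hat
        push_neg at hat
        obtain ⟨u, v, hu, hv, he, hu1, hv1⟩ := hat hq hq1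
        exact ⟨u, v, hu, hv, he, hu1, hv1⟩
      obtain ⟨u, v, hu, hv, he, hu1, hv1⟩ := hex
      have hlu : lam hM u ≤ n := by
        have h3 := congrArg (lam hM) he
        rw [lam_mul hM] at h3
        have := lam_pos hM hv1
        omega
      obtain ⟨p, r, hp, hr, hpr⟩ := ih u hlu hu hu1
      exact ⟨p, r * v, hp, mem_qc ((quasiCenter M).mul_mem (qc_mem hr) (qc_mem hv)),
        by rw [he, hpr, mul_assoc]⟩

theorem atom_prime {p a b : M} (hp : QAtom p) (ha : QuasiCentral a) (hb : QuasiCentral b)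
    (h : LDvd p (a * b)) : LDvd p a ∨ LDvd p b := by
  by_cases hpa : LDvd p a
  · exact Or.inl hpa
  right
  obtain ⟨g, hg⟩ := hM.exists_gcd p a
  have hgq := gcd_qc hM hp.1 ha hg
  obtain ⟨e, he⟩ := hg.1
  have heq : QuasiCentral e := div_qc_left hM hgq (he ▸ hp.1)
  have hg1 : g = 1 := by
    rcases hp.2.2 g e hgq heq he with h1 | h1
    · exact h1
    · exfalso; apply hpa
      rw [← (show g = p by rw [he, h1, mul_one])]; exact hg.2.1
  rw [hg1] at hg
  have hbig := gcdMulLeft hM b hg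
  have h1 : LDvd p (b * p) := ⟨b, (qc_comm hM hp.1 hb).symm⟩
  have h2 : LDvd p (b * a) := by rw [qc_comm hM hb ha]; exact h
  have h3 := hbig.2.2 p h1 h2
  rw [mul_one] at h3
  exact h3

end DivMon3

theorem stmt19 {M : Type*} [Monoid M] (hM : IsDivisibilityMonoid M) :
    ∃ n : ℕ, Nonempty (quasiCenter M ≃* Multiplicative (Fin n → ℕ)) := by
  classical
  have hfin := atoms_finite hM
  letI : CommMonoid ↥(quasiCenter M) :=
    { (inferInstance : Monoid ↥(quasiCenter M)) with
      mul_comm := fun x y => Subtype.ext (qc_comm hM (mem_qc x.2) (mem_qc y.2)) }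
  set A := hfin.toFinset with hA
  refine ⟨A.card, ⟨?_⟩⟩
  set n := A.card with hn
  -- the list of atoms
  set pa : Fin n → M := fun i => (A.equivFin.symm i).1 with hpadef
  have hpa : ∀ i, QAtom (pa i) := fun i => hfin.mem_toFinset.1 (A.equivFin.symm i).2
  have hpainj : Function.Injective pa := fun i j h =>
    A.equivFin.symm.injective (Subtype.ext h)
  set P : Fin n → ↥(quasiCenter M) := fun i => ⟨pa i, qc_mem (hpa i).1⟩ with hPdef
  set Φfun : (Fin n → ℕ) → ↥(quasiCenter M) := fun k => ∏ i, P i ^ k i with hΦdef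
  have hΦmul : ∀ k l, Φfun (k + l) = Φfun k * Φfun l := by
    intro k l
    simp only [hΦdef, Pi.add_apply, pow_add]
    exact Finset.prod_mul_distrib
  have hΦone : Φfun 0 = 1 := by simp [hΦdef]
  have hext : ∀ (k : Fin n → ℕ) (i : Fin n),
      Φfun (Function.update k i (k i + 1)) = P i * Φfun k := by
    intro k i
    show (∏ j, P j ^ (Function.update k i (k i + 1)) j) = P i * ∏ j, P j ^ k j
    rw [← Finset.mul_prod_erase Finset.univ
        (fun j => P j ^ (Function.update k i (k i + 1)) j) (Finset.mem_univ i),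
      ← Finset.mul_prod_erase Finset.univ (fun j => P j ^ k j) (Finset.mem_univ i)]
    have e3 : ∏ j ∈ Finset.univ.erase i, P j ^ (Function.update k i (k i + 1)) j
        = ∏ j ∈ Finset.univ.erase i, P j ^ k j :=
      Finset.prod_congr rfl
        (fun j hj => by rw [Function.update_of_ne (Finset.ne_of_mem_erase hj)])
    rw [e3, Function.update_self, pow_succ', mul_assoc]
  have hdvd_of_pos : ∀ (k : Fin n → ℕ) (i : Fin n), k i ≠ 0 →
      LDvd (pa i) ((Φfun k : ↥(quasiCenter M)) : M) := by
    intro k i hki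
    obtain ⟨m, hm⟩ := Nat.exists_eq_succ_of_ne_zero hki
    set k' := Function.update k i m with hk'
    have hupd : Function.update k' i (k' i + 1) = k := by
      funext j
      by_cases hj : j = i
      · subst hj; simp [hk', hm]
      · simp [hk', Function.update_of_ne hj]
    have h2 : Φfun k = P i * Φfun k' := by rw [← hupd, hext]
    exact ⟨((Φfun k' : ↥(quasiCenter M)) : M), by rw [h2]; rfl⟩
  -- an atom dividing a power is the base
  have aux2 : ∀ (e : ℕ) (i j : Fin n),
      LDvd (pa i) (((P j ^ e : ↥(quasiCenter M)) : M)) → e ≠ 0 ∧ pa i = pa j := by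
    intro e
    induction e with
    | zero =>
      intro i j h
      rw [pow_zero] at h
      exact absurd ((ldvd_one_iff hM).1 h) (hpa i).2.1
    | succ e ihe =>
      intro i j h
      refine ⟨Nat.succ_ne_zero e, ?_⟩
      rw [pow_succ'] at h
      have h' : LDvd (pa i) (pa j * ((P j ^ e : ↥(quasiCenter M)) : M)) := h
      rcases atom_prime hM (hpa i) (hpa j).1 (mem_qc (P j ^ e).2) h' with hc | hc
      · obtain ⟨d, hd⟩ := hc
        have hdq : QuasiCentral d := div_qc_left hM (hpa i).1 (hd ▸ (hpa j).1)
        rcases (hpa j).2.2 (pa i) d (hpa i).1 hdq hd with h1 | h1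
        · exact absurd h1 (hpa i).2.1
        · rw [hd, h1, mul_one]
      · exact (ihe i j hc).2
  -- an atom dividing a product of atom powers appears in the product
  have hadp : ∀ (s : Finset (Fin n)) (l : Fin n → ℕ) (i : Fin n),
      LDvd (pa i) (((∏ j ∈ s, P j ^ l j : ↥(quasiCenter M))) : M) →
        ∃ j ∈ s, l j ≠ 0 ∧ pa i = pa j := by
    intro s
    induction s using Finset.induction_on with
    | empty =>
      intro l i h
      rw [Finset.prod_empty] at h
      exact absurd ((ldvd_one_iff hM).1 h) (hpa i).2.1
    | @insert j s hjs ihs =>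
      intro l i h
      rw [Finset.prod_insert hjs] at h
      have h' : LDvd (pa i)
          (((P j ^ l j : ↥(quasiCenter M)) : M) *
            ((∏ j' ∈ s, P j' ^ l j' : ↥(quasiCenter M)) : M)) := h
      rcases atom_prime hM (hpa i) (mem_qc (P j ^ l j).2)
          (mem_qc (∏ j' ∈ s, P j' ^ l j').2) h' with hc | hc
      · obtain ⟨he, heq⟩ := aux2 (l j) i j hc
        exact ⟨j, Finset.mem_insert_self j s, he, heq⟩
      · obtain ⟨j', hj', hl', hpp⟩ := ihs l i hc
        exact ⟨j', Finset.mem_insert_of_mem hj', hl', hpp⟩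
  -- Φfun l = 1 → l = 0
  have hker : ∀ l : Fin n → ℕ, Φfun l = 1 → l = 0 := by
    intro l hl
    funext i
    by_contra hli
    have h := hdvd_of_pos l i hli
    rw [hl] at h
    exact (hpa i).2.1 ((ldvd_one_iff hM).1 h)
  -- injectivity
  have hinj : ∀ (N : ℕ) (k l : Fin n → ℕ), (∑ i, k i) ≤ N → Φfun k = Φfun l → k = l := by
    intro N
    induction N with
    | zero =>
      intro k l hk he
      have hk0 : k = 0 := by
        funext i
        have := Finset.single_le_sum (f := k) (fun j _ => Nat.zero_le (k j))
          (Finset.mem_univ i)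
        simp only [Pi.zero_apply]
        omega
      rw [hk0] at he ⊢
      exact (hker l (he.symm.trans hΦone)).symm
    | succ N ihN =>
      intro k l hk he
      by_cases hk0 : k = 0
      · rw [hk0] at he ⊢
        exact (hker l (he.symm.trans hΦone)).symm
      · obtain ⟨i, hi⟩ := Function.ne_iff.1 hk0
        have hi : k i ≠ 0 := hi
        have hpil : LDvd (pa i) ((Φfun l : ↥(quasiCenter M)) : M) := by
          rw [← he]; exact hdvd_of_pos k i hi
        obtain ⟨j, _, hlj, hpp⟩ := hadp Finset.univ l i hpil
        have hij : i = j := hpainj hpp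
        have hli : l i ≠ 0 := by rw [hij]; exact hlj
        -- peel one factor of `pa i` off both sides
        obtain ⟨mk, hmk⟩ := Nat.exists_eq_succ_of_ne_zero hi
        obtain ⟨ml, hml⟩ := Nat.exists_eq_succ_of_ne_zero hli
        set k' := Function.update k i mk with hk'
        set l' := Function.update l i ml with hl'
        have hupk : Function.update k' i (k' i + 1) = k := by
          funext j'
          by_cases hj : j' = i
          · subst hj; simp [hk', hmk]
          · simp [hk', Function.update_of_ne hj]
        have hupl : Function.update l' i (l' i + 1) = l := by
          funext j'
          by_cases hj : j' = i
          · subst hj; simp [hl', hml]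
          · simp [hl', Function.update_of_ne hj]
        have hek : Φfun k = P i * Φfun k' := by rw [← hupk, hext]
        have hel : Φfun l = P i * Φfun l' := by rw [← hupl, hext]
        have hcan : Φfun k' = Φfun l' := by
          apply Subtype.ext
          apply lcancel hM (a := pa i)
          have h5 : ((P i * Φfun k' : ↥(quasiCenter M)) : M)
              = ((P i * Φfun l' : ↥(quasiCenter M)) : M) := by
            rw [← hek, ← hel, he]
          exact h5
        have hsum : (∑ i', k' i') ≤ N := by
          have e1 : ∑ j', k' j' = mk + ∑ j' ∈ Finset.univ \ {i}, k j' := by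
            rw [hk', Finset.sum_update_of_mem (Finset.mem_univ i)]
          have e2 : ∑ j', k j' = (∑ j' ∈ Finset.univ \ {i}, k j') + k i :=
            Finset.sum_eq_sum_sdiff_singleton_add (Finset.mem_univ i) k
          omega
        have := ihN k' l' hsum hcan
        rw [← hupk, ← hupl, this]
  -- surjectivity
  have hsurj : ∀ (N : ℕ) (q : ↥(quasiCenter M)), lam hM (q : M) ≤ N →
      ∃ k, Φfun k = q := by
    intro N
    induction N with
    | zero =>
      intro q hq
      refine ⟨0, Subtype.ext ?_⟩
      rw [hΦone]
      exact ((lam_eq_zero hM (Nat.le_zero.1 hq))).symm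
    | succ N ihN =>
      intro q hq
      by_cases hq1 : (q : M) = 1
      · refine ⟨0, Subtype.ext ?_⟩
        rw [hΦone]
        exact hq1.symm
      · obtain ⟨p, r, hp, hr, hpr⟩ :=
          exists_atom_dvd hM (lam hM (q : M)) (q : M) (le_refl _) (mem_qc q.2) hq1
        have hpA : p ∈ A := hfin.mem_toFinset.2 hp
        set i := A.equivFin ⟨p, hpA⟩ with hi
        have hpi : pa i = p := by
          rw [hpadef]
          simp [hi]
        have hlr : lam hM r ≤ N := by
          have h3 := congrArg (lam hM) hpr
          rw [lam_mul hM] at h3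
          have := lam_pos hM hp.2.1
          omega
        obtain ⟨k, hk⟩ := ihN ⟨r, qc_mem hr⟩ hlr
        refine ⟨Function.update k i (k i + 1), ?_⟩
        rw [hext k i, hk]
        apply Subtype.ext
        show pa i * r = (q : M)
        rw [hpi, ← hpr]
  -- assemble the isomorphism
  let Φ : Multiplicative (Fin n → ℕ) →* ↥(quasiCenter M) :=
    { toFun := fun k => Φfun (Multiplicative.toAdd k)
      map_one' := hΦone
      map_mul' := fun k l => hΦmul _ _ }
  have hbij : Function.Bijective Φ := by
    constructor
    · intro k l h
      have h2 := hinj (∑ i, (Multiplicative.toAdd k) i) (Multiplicative.toAdd k)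
        (Multiplicative.toAdd l) (le_refl _) h
      exact Multiplicative.toAdd.injective h2
    · intro q
      obtain ⟨k, hk⟩ := hsurj (lam hM (q : M)) q (le_refl _)
      exact ⟨Multiplicative.ofAdd k, hk⟩
  exact (MulEquiv.ofBijective Φ hbij).symm
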